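/- (Theorem 1, continuous form: RING is roto-translation invariant.) Let f, h : ℝ × ℝ → ℝ, let α : ℝ and d = (d₁, d₂) : ℝ × ℝ, and let g : ℝ × ℝ → ℝ be the roto-translation of f, g p = f (ρ (-α) (p - d)). For u : ℝ × ℝ → ℝ define the correlation map C_u : ℝ → ℝ by C_u k := ∫ θ in Set.Ioc 0 (2 * π), (∫ ω : ℝ, M u (θ + k) ω * M h θ ω). Then ⨆ k : ℝ, C_g k = ⨆ k : ℝ, C_f k. (In fact C_g k = C_f (k - α) for every k, since M g θ ω = M f (θ - α) ω pointwise.) -/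

import Mathlib

open MeasureTheory Real

/-- Radon transform of an image `f : ℝ × ℝ → ℝ`. -/
noncomputable def Radon (f : ℝ × ℝ → ℝ) (θ τ : ℝ) : ℝ :=
  ∫ t : ℝ, f (τ * Real.cos θ - t * Real.sin θ, τ * Real.sin θ + t * Real.cos θ)

/-- Rotation of the plane by angle `α`. -/
noncomputable def ρ (α : ℝ) (p : ℝ × ℝ) : ℝ × ℝ :=
  (p.1 * Real.cos α - p.2 * Real.sin α, p.1 * Real.sin α + p.2 * Real.cos α)

/-- TING of `f`: magnitude of the Fourier integral (along `τ`) of the sinogram row `θ`. -/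
noncomputable def TING (f : ℝ × ℝ → ℝ) (θ ω : ℝ) : ℝ :=
  ‖FourierTransform.fourier (fun τ : ℝ => (Radon f θ τ : ℂ)) ω‖

/-- Correlation map between the TINGs of `u` and `h` at angular shift `k`. -/
noncomputable def corrMap (u h : ℝ × ℝ → ℝ) (k : ℝ) : ℝ :=
  ∫ θ in Set.Ioc 0 (2 * Real.pi), (∫ ω : ℝ, TING u (θ + k) ω * TING h θ ω)

lemma Radon_shift (f : ℝ × ℝ → ℝ) (α : ℝ) (d : ℝ × ℝ)
    (g : ℝ × ℝ → ℝ) (hg : ∀ p, g p = f (ρ (-α) (p - d))) (θ τ : ℝ) :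
    Radon g θ τ = Radon f (θ - α) (τ - (d.1 * Real.cos θ + d.2 * Real.sin θ)) := by
  set a := d.1 * Real.cos θ + d.2 * Real.sin θ
  set b := -d.1 * Real.sin θ + d.2 * Real.cos θ
  have key : ∀ t : ℝ,
      g (τ * Real.cos θ - t * Real.sin θ, τ * Real.sin θ + t * Real.cos θ) =
        f ((τ - a) * Real.cos (θ - α) - (t - b) * Real.sin (θ - α),
           (τ - a) * Real.sin (θ - α) + (t - b) * Real.cos (θ - α)) := by
    intro t
    rw [hg]
    congr 1
    have h1 := Real.sin_sq_add_cos_sq θ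
    simp only [ρ, Prod.fst_sub, Prod.snd_sub, Real.cos_neg, Real.sin_neg, Real.cos_sub,
      Real.sin_sub, Prod.mk.injEq, a, b]
    constructor
    · linear_combination (d.1 * Real.cos α + d.2 * Real.sin α) * h1
    · linear_combination (-(d.1 * Real.sin α) + d.2 * Real.cos α) * h1
  unfold Radon
  simp_rw [key]
  exact integral_sub_right_eq_self
    (fun t => f ((τ - a) * Real.cos (θ - α) - t * Real.sin (θ - α),
      (τ - a) * Real.sin (θ - α) + t * Real.cos (θ - α))) b

lemma TING_shift (f : ℝ × ℝ → ℝ) (α : ℝ) (d : ℝ × ℝ)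
    (g : ℝ × ℝ → ℝ) (hg : ∀ p, g p = f (ρ (-α) (p - d))) (θ ω : ℝ) :
    TING g θ ω = TING f (θ - α) ω := by
  set a := d.1 * Real.cos θ + d.2 * Real.sin θ
  have h1 : (fun τ => (Radon g θ τ : ℂ)) =
      ((fun τ => (Radon f (θ - α) τ : ℂ)) ∘ fun v => v + (-a)) := by
    funext τ
    simp [Radon_shift f α d g hg θ τ, Function.comp, sub_eq_add_neg, a]
  unfold TING
  rw [h1]
  change ‖VectorFourier.fourierIntegral Real.fourierChar volume (innerₗ ℝ) _ ω‖ =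
    ‖VectorFourier.fourierIntegral Real.fourierChar volume (innerₗ ℝ) _ ω‖
  rw [VectorFourier.fourierIntegral_comp_add_right]
  simp

/-- Theorem 1, continuous form: RING is roto-translation invariant. -/
theorem RING_rototranslation_invariant (f h : ℝ × ℝ → ℝ) (α : ℝ) (d : ℝ × ℝ)
    (g : ℝ × ℝ → ℝ) (hg : ∀ p, g p = f (ρ (-α) (p - d))) :
    ⨆ k : ℝ, corrMap g h k = ⨆ k : ℝ, corrMap f h k := by
  have hcm : ∀ k, corrMap g h k = corrMap f h (k - α) := by
    intro k
    unfold corrMap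
    congr 1
    funext θ
    congr 1
    funext ω
    rw [TING_shift f α d g hg]
    ring_nf
  calc ⨆ k : ℝ, corrMap g h k = ⨆ k : ℝ, corrMap f h (k - α) := by
        exact iSup_congr hcm
    _ = ⨆ k : ℝ, corrMap f h k := by
        exact (Function.Surjective.iSup_comp (fun y => ⟨y + α, by ring⟩) _)
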